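/- For every integer n ≥ 0 and t with t₁+t₂+t₃+t₄=0, the Dirichlet kernel D_n^H(t) = Σ_{k ∈ ℍ_n^*} exp((πi/2) k·t) equals ∏_{j=1}^4 K_n(t_j) - ∏_{j=1}^4 (K_n(t_j) - 1), where K_n(t) = Σ_{l=0}^{n} e^{2πi l t}. -/

import Mathlib

open Real

/-- The finite symmetric index set ℍ_n^*. -/
noncomputable def HstarF (n : ℕ) : Finset (Fin 4 → ℤ) :=
  (Finset.Icc (fun _ : Fin 4 => -(3 * (n : ℤ))) (fun _ : Fin 4 => 3 * (n : ℤ))).filter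
    (fun k => (∑ i, k i) = 0 ∧ (∀ i j : Fin 4, k i % 4 = k j % 4) ∧
      ∀ i j : Fin 4, -(4 * (n : ℤ)) ≤ k i - k j ∧ k i - k j ≤ 4 * (n : ℤ))

/-- The Dirichlet kernel D_n^H. -/
noncomputable def DnH (n : ℕ) (t : Fin 4 → ℝ) : ℂ :=
  ∑ k ∈ HstarF n, Complex.exp ((π : ℂ) * Complex.I / 2 * ∑ i, (k i : ℂ) * (t i : ℂ))

/-- The geometric exponential sum K_n(t) = Σ_{l=0}^n e^{2πilt}. -/
noncomputable def Kn (n : ℕ) (t : ℝ) : ℂ :=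
  ∑ l ∈ Finset.range (n + 1), Complex.exp (2 * (π : ℂ) * Complex.I * (l : ℂ) * (t : ℂ))

noncomputable def eterm (t : Fin 4 → ℝ) (l : Fin 4 → ℕ) : ℂ :=
  Complex.exp (2 * (π : ℂ) * Complex.I * ∑ j, (l j : ℂ) * (t j : ℂ))

lemma prod_Kn (n : ℕ) (t : Fin 4 → ℝ) :
    ∏ j : Fin 4, Kn n (t j)
      = ∑ l ∈ Fintype.piFinset (fun _ : Fin 4 => Finset.range (n+1)), eterm t l := by
  unfold Kn eterm
  rw [Finset.prod_univ_sum]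
  refine Finset.sum_congr rfl fun l _ => ?_
  rw [← Complex.exp_sum, Finset.mul_sum]
  congr 1
  exact Finset.sum_congr rfl fun j _ => by ring

lemma Kn_sub_one (n : ℕ) (t : ℝ) :
    Kn n t - 1 = ∑ l ∈ Finset.Icc 1 n, Complex.exp (2 * (π : ℂ) * Complex.I * (l : ℂ) * (t : ℂ)) := by
  have h : Finset.range (n+1) = insert 0 (Finset.Icc 1 n) := by
    ext x; simp [Finset.mem_range, Finset.mem_Icc]; omega
  unfold Kn
  rw [h, Finset.sum_insert (by simp)]
  simp

lemma prod_Kn_sub_one (n : ℕ) (t : Fin 4 → ℝ) :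
    ∏ j : Fin 4, (Kn n (t j) - 1)
      = ∑ l ∈ Fintype.piFinset (fun _ : Fin 4 => Finset.Icc 1 n), eterm t l := by
  have h : ∀ j : Fin 4, Kn n (t j) - 1
      = ∑ l ∈ Finset.Icc 1 n, Complex.exp (2 * (π : ℂ) * Complex.I * (l : ℂ) * ((t j : ℝ) : ℂ)) :=
    fun j => Kn_sub_one n (t j)
  rw [Finset.prod_congr rfl fun j _ => h j, Finset.prod_univ_sum]
  refine Finset.sum_congr rfl fun l _ => ?_
  unfold eterm
  rw [← Complex.exp_sum, Finset.mul_sum]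
  congr 1
  exact Finset.sum_congr rfl fun j _ => by ring

lemma mem_HstarF {n : ℕ} {k : Fin 4 → ℤ} :
    k ∈ HstarF n ↔ (∀ i, -(3*(n:ℤ)) ≤ k i ∧ k i ≤ 3*n) ∧ (∑ i, k i) = 0 ∧
      (∀ i j, k i % 4 = k j % 4) ∧ ∀ i j, -(4*(n:ℤ)) ≤ k i - k j ∧ k i - k j ≤ 4*n := by
  unfold HstarF
  simp only [Finset.mem_filter, Finset.mem_Icc, Pi.le_def]
  constructor
  · rintro ⟨⟨h1, h2⟩, h3, h4, h5⟩
    exact ⟨fun i => ⟨h1 i, h2 i⟩, h3, h4, h5⟩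
  · rintro ⟨h1, h2, h3, h4⟩
    exact ⟨⟨fun i => (h1 i).1, fun i => (h1 i).2⟩, h2, h3, h4⟩

lemma min'_image (k : Fin 4 → ℤ) (j₀ : Fin 4) (hmin : ∀ i, k j₀ ≤ k i) :
    (Finset.image k Finset.univ).min' (Finset.univ_nonempty.image k) = k j₀ := by
  apply le_antisymm
  · exact Finset.min'_le _ _ (Finset.mem_image_of_mem k (Finset.mem_univ j₀))
  · apply Finset.le_min'
    intro y hy
    obtain ⟨i, -, rfl⟩ := Finset.mem_image.mp hy
    exact hmin i

lemma exists_min (k : Fin 4 → ℤ) : ∃ j₀, ∀ i, k j₀ ≤ k i := by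
  obtain ⟨j₀, -, h⟩ := Finset.exists_min_image Finset.univ k ⟨0, Finset.mem_univ 0⟩
  exact ⟨j₀, fun i => h i (Finset.mem_univ i)⟩

set_option maxHeartbeats 1000000 in
theorem stmt9 (n : ℕ) (t : Fin 4 → ℝ) (ht : (∑ i, t i) = 0) :
    DnH n t = (∏ j : Fin 4, Kn n (t j)) - ∏ j : Fin 4, (Kn n (t j) - 1) := by
  classical
  have hCB : Fintype.piFinset (fun _ : Fin 4 => Finset.Icc 1 n)
      ⊆ Fintype.piFinset (fun _ : Fin 4 => Finset.range (n+1)) := by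
    intro l hl
    simp only [Fintype.mem_piFinset, Finset.mem_range, Finset.mem_Icc] at *
    intro i; have := hl i; omega
  have hsdiff : ∑ l ∈ Fintype.piFinset (fun _ : Fin 4 => Finset.range (n+1)) \
        Fintype.piFinset (fun _ : Fin 4 => Finset.Icc 1 n), eterm t l
      = (∑ l ∈ Fintype.piFinset (fun _ : Fin 4 => Finset.range (n+1)), eterm t l)
        - ∑ l ∈ Fintype.piFinset (fun _ : Fin 4 => Finset.Icc 1 n), eterm t l := by
    rw [eq_sub_iff_add_eq, Finset.sum_sdiff hCB]
  rw [prod_Kn, prod_Kn_sub_one, ← hsdiff]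
  have ht4 : ((t 0 : ℂ)) + t 1 + t 2 + t 3 = 0 := by
    have := congrArg (Complex.ofReal) ht
    push_cast [Fin.sum_univ_four] at this
    simpa using this
  refine (Finset.sum_nbij'
    (i := fun (l : Fin 4 → ℕ) (j : Fin 4) => 4 * (l j : ℤ) - ∑ i, (l i : ℤ))
    (j := fun (k : Fin 4 → ℤ) (j : Fin 4) =>
      ((k j - Finset.min' (Finset.image k Finset.univ) (Finset.univ_nonempty.image k)) / 4).toNat)
    ?_ ?_ ?_ ?_ ?_).symm
  · -- maps B \ C into HstarF
    intro l hl
    simp only [Finset.mem_sdiff, Fintype.mem_piFinset, Finset.mem_range,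
      Finset.mem_Icc, not_forall] at hl
    obtain ⟨hln, j₁, hj₁⟩ := hl
    have hb : ∀ i, l i ≤ n := fun i => by have := hln i; omega
    rw [mem_HstarF]
    have hS : ∑ i, (l i : ℤ) = (l 0 : ℤ) + l 1 + l 2 + l 3 := Fin.sum_univ_four _
    have h0 := hb 0; have h1 := hb 1; have h2 := hb 2; have h3 := hb 3
    refine ⟨?_, ?_, ?_, ?_⟩
    · intro i
      rw [hS]
      fin_cases i <;> simp <;> omega
    · rw [Fin.sum_univ_four]
      rw [hS]
      ring
    · intro i j
      omega
    · intro i j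
      have hi := hb i; have hj := hb j
      constructor <;> omega
  · -- maps HstarF into B \ C
    intro k hk
    rw [mem_HstarF] at hk
    obtain ⟨hbd, hsum, hmod, hdiff⟩ := hk
    obtain ⟨j₀, hmin⟩ := exists_min k
    try dsimp only
    rw [min'_image k j₀ hmin]
    simp only [Finset.mem_sdiff, Fintype.mem_piFinset, Finset.mem_range,
      Finset.mem_Icc, not_forall]
    constructor
    · intro i
      have h1 := hmin i
      have h2 := (hdiff i j₀).2
      have h3 := hmod i j₀
      omega
    · exact ⟨j₀, by simp⟩
  · -- left inverse
    intro l hl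
    simp only [Finset.mem_sdiff, Fintype.mem_piFinset, Finset.mem_range,
      Finset.mem_Icc, not_forall] at hl
    obtain ⟨hln, j₁, hj₁⟩ := hl
    have hb : ∀ i, l i ≤ n := fun i => by have := hln i; omega
    have hj0 : l j₁ = 0 := by have := hln j₁; omega
    have hS : ∑ i, (l i : ℤ) = (l 0 : ℤ) + l 1 + l 2 + l 3 := Fin.sum_univ_four _
    have hmin : ∀ i : Fin 4, (fun j => 4 * (l j : ℤ) - ∑ i, (l i : ℤ)) j₁
        ≤ (fun j => 4 * (l j : ℤ) - ∑ i, (l i : ℤ)) i := by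
      intro i
      simp only [hj0]
      have : (0:ℤ) ≤ (l i : ℤ) := Int.natCast_nonneg _
      omega
    funext j
    try dsimp only
    rw [min'_image _ j₁ hmin]
    simp only [hj0]
    push_cast
    omega
  · -- right inverse
    intro k hk
    rw [mem_HstarF] at hk
    obtain ⟨hbd, hsum, hmod, hdiff⟩ := hk
    obtain ⟨j₀, hmin⟩ := exists_min k
    funext j
    try dsimp only
    rw [min'_image k j₀ hmin]
    try dsimp only
    have hS : ∑ i, (((k i - k j₀) / 4).toNat : ℤ)
        = (((k 0 - k j₀) / 4).toNat : ℤ) + (((k 1 - k j₀) / 4).toNat : ℤ)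
          + (((k 2 - k j₀) / 4).toNat : ℤ) + (((k 3 - k j₀) / 4).toNat : ℤ) := Fin.sum_univ_four _
    have hsum4 : k 0 + k 1 + k 2 + k 3 = 0 := by rw [← Fin.sum_univ_four k]; exact hsum
    have hm0 := hmod 0 j₀; have hm1 := hmod 1 j₀; have hm2 := hmod 2 j₀; have hm3 := hmod 3 j₀
    have hl0 := hmin 0; have hl1 := hmin 1; have hl2 := hmin 2; have hl3 := hmin 3
    have hlj := hmin j
    have hmj := hmod j j₀
    rw [hS]
    have e : ∀ i : Fin 4, (((k i - k j₀) / 4).toNat : ℤ) = (k i - k j₀) / 4 := fun i =>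
      Int.toNat_of_nonneg (Int.ediv_nonneg (sub_nonneg.mpr (hmin i)) (by norm_num))
    rw [e 0, e 1, e 2, e 3, e j]
    omega
  · -- terms agree
    intro l hl
    unfold eterm
    try dsimp only
    congr 1
    have hS : ∑ i, (l i : ℤ) = (l 0 : ℤ) + l 1 + l 2 + l 3 := Fin.sum_univ_four _
    rw [Fin.sum_univ_four, Fin.sum_univ_four]
    push_cast [hS]
    linear_combination ((π:ℂ) * Complex.I / 2 * ((l 0 : ℂ) + l 1 + l 2 + l 3)) * ht4
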